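/- Let A and B be bounded operators on a complex Hilbert space H with A ≥ 0 (A positive), and let 0<μ<1 be a real number. Assume BB* − B*B = (1−μ)A and A + B*B = 1. Then ker(B) = {0} if and only if A = 0. -/

import Mathlib

open ContinuousLinearMap

noncomputable section

open Pointwise in
set_option maxHeartbeats 2000000 in
/-- Lemma 4 of the paper: if `A ≥ 0`, `BB* - B*B = (1-μ)A` and `A + B*B = 1` with
`0 < μ < 1`, then `ker B = {0}` iff `A = 0`. -/
theorem kernel_trivial_iff_A_eq_zero
    {H : Type*} [NormedAddCommGroup H] [InnerProductSpace ℂ H] [CompleteSpace H]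
    (A B : H →L[ℂ] H) (hA : A.IsPositive) (μ : ℝ) (hμ0 : 0 < μ) (hμ1 : μ < 1)
    (h1 : B * adjoint B - adjoint B * B = ((1 - μ : ℝ) : ℂ) • A)
    (h2 : A + adjoint B * B = 1) :
    LinearMap.ker (B : H →ₗ[ℂ] H) = ⊥ ↔ A = 0 := by
  have hsa : IsSelfAdjoint A := hA.isSelfAdjoint
  have hBB : adjoint B * B = 1 - A := eq_sub_of_add_eq' h2
  constructor
  · -- hard direction
    intro hker
    by_contra hA0
    haveI : Nontrivial H := by
      by_contra h
      rw [not_nontrivial_iff_subsingleton] at h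
      exact hA0 (Subsingleton.elim A 0)
    -- algebra
    have hBB2 : B * adjoint B = 1 - (μ:ℂ) • A := by
      have h := sub_eq_iff_eq_add.mp h1
      rw [hBB] at h
      rw [h]; push_cast; module
    have comm : B * A = (μ:ℂ) • (A * B) := by
      have h : B * (adjoint B * B) = (B * adjoint B) * B := (mul_assoc _ _ _).symm
      rw [hBB, hBB2, mul_sub, sub_mul, mul_one, one_mul, smul_mul_assoc] at h
      exact sub_right_injective h
    have comm2 : A * adjoint B = (μ:ℂ) • (adjoint B * A) := by
      have h := congrArg star comm
      simpa [star_eq_adjoint, hsa.star_eq, Complex.conj_ofReal, star_smul, star_mul] using h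
    have key : ∀ k : ℕ, (μ:ℂ)^k • (adjoint B * A^k) = A^k * adjoint B := by
      intro k; induction k with
      | zero => simp
      | succ k ih =>
          rw [pow_succ' A k, pow_succ ((μ:ℂ)) k]
          calc ((μ:ℂ)^k * (μ:ℂ)) • (adjoint B * (A * A^k))
              = (μ:ℂ)^k • (((μ:ℂ) • (adjoint B * A)) * A^k) := by
                rw [smul_mul_assoc, smul_smul, mul_assoc, mul_comm ((μ:ℂ)^k)]
            _ = (μ:ℂ)^k • ((A * adjoint B) * A^k) := by rw [← comm2]
            _ = A * ((μ:ℂ)^k • (adjoint B * A^k)) := by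
                rw [mul_assoc, mul_smul_comm]
            _ = A * (A^k * adjoint B) := by rw [ih]
            _ = A * A^k * adjoint B := (mul_assoc _ _ _).symm
    have key2 : ∀ k : ℕ, A^k * (1 - A) = (μ:ℂ)^k • (adjoint B * A^k * B) := by
      intro k
      calc A^k * (1 - A) = A^k * (adjoint B * B) := by rw [hBB]
        _ = (A^k * adjoint B) * B := (mul_assoc _ _ _).symm
        _ = ((μ:ℂ)^k • (adjoint B * A^k)) * B := by rw [key]
        _ = (μ:ℂ)^k • (adjoint B * A^k * B) := by rw [smul_mul_assoc]
    -- norms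
    have hApos : (0:H →L[ℂ] H) ≤ A := (ContinuousLinearMap.nonneg_iff_isPositive A).mpr hA
    have h1Apos : (0:H →L[ℂ] H) ≤ 1 - A := by
      rw [← hBB, ← star_eq_adjoint]; exact star_mul_self_nonneg B
    have hAle1 : A ≤ 1 := by simpa using sub_nonneg.mp h1Apos
    have hnA1 : ‖A‖ ≤ 1 := by
      rw [CStarAlgebra.norm_le_iff_le_algebraMap A zero_le_one hApos]
      simpa using hAle1
    have hadj : ‖adjoint B‖ = ‖B‖ := adjoint.norm_map B
    have hbound : ∀ k : ℕ, ‖A^k * (1 - A)‖ ≤ μ^k * ‖A‖^k * ‖B‖^2 := by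
      intro k
      rw [key2 k, norm_smul]
      have hnorm1 : ‖((μ:ℂ))^k‖ = μ^k := by
        rw [norm_pow, Complex.norm_real, Real.norm_of_nonneg hμ0.le]
      rw [hnorm1]
      have hn2 : ‖adjoint B * A^k * B‖ ≤ ‖A‖^k * ‖B‖^2 := by
        calc ‖adjoint B * A^k * B‖ ≤ ‖adjoint B * A^k‖ * ‖B‖ := norm_mul_le _ _
          _ ≤ ‖adjoint B‖ * ‖A^k‖ * ‖B‖ := by
              gcongr; exact norm_mul_le _ _
          _ ≤ ‖B‖ * ‖A‖^k * ‖B‖ := by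
              rw [hadj]
              gcongr
              exact norm_pow_le A k
          _ = ‖A‖^k * ‖B‖^2 := by ring
      calc μ^k * ‖adjoint B * A^k * B‖ ≤ μ^k * (‖A‖^k * ‖B‖^2) := by
            have := pow_nonneg hμ0.le k; gcongr
        _ = μ^k * ‖A‖^k * ‖B‖^2 := by ring
    -- spectrum facts
    have hspec_nonneg : ∀ l ∈ spectrum ℝ A, 0 ≤ l := fun l hl =>
      spectrum_nonneg_of_nonneg hApos hl
    have hspec_le1 : ∀ l ∈ spectrum ℝ A, l ≤ 1 := by
      intro l hl
      have h1l : (1:ℝ) - l ∈ spectrum ℝ ((1:H →L[ℂ] H) - A) := by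
        have hm : (1:ℝ) - l ∈ ({(1:ℝ)} : Set ℝ) - spectrum ℝ A :=
          Set.sub_mem_sub rfl hl
        rw [spectrum.singleton_sub_eq] at hm
        simpa using hm
      linarith [spectrum_nonneg_of_nonneg h1Apos h1l]
    have hspec_bound : ∀ l ∈ spectrum ℝ A, ∀ k : ℕ,
        l^k * (1 - l) ≤ μ^k * ‖A‖^k * ‖B‖^2 := by
      intro l hl k
      have hmem : l^k - l^(k+1) ∈ spectrum ℝ (A^k - A^(k+1)) := by
        have h := spectrum.subset_polynomial_aeval A
          ((Polynomial.X : Polynomial ℝ)^k - (Polynomial.X)^(k+1))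
          (Set.mem_image_of_mem _ hl)
        simpa using h
      have hle : l^k - l^(k+1) ≤ ‖A^k - A^(k+1)‖ :=
        (Real.le_norm_self _).trans (spectrum.norm_le_norm_of_mem hmem)
      have heq : A^k - A^(k+1) = A^k * (1 - A) := by
        rw [mul_sub, mul_one, ← pow_succ]
      calc l^k * (1 - l) = l^k - l^(k+1) := by ring
        _ ≤ ‖A^k - A^(k+1)‖ := hle
        _ = ‖A^k * (1-A)‖ := by rw [heq]
        _ ≤ μ^k * ‖A‖^k * ‖B‖^2 := hbound k
    -- ‖A‖ = 1
    haveI : Nontrivial (H →L[ℂ] H) := nontrivial_of_ne A 0 hA0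
    have hnormmem : ‖A‖ ∈ spectrum ℝ A := CStarAlgebra.norm_mem_spectrum_of_nonneg hApos
    have hnA_pos : 0 < ‖A‖ := norm_pos_iff.mpr hA0
    have hnA : ‖A‖ = 1 := by
      refine le_antisymm hnA1 ?_
      by_contra hlt
      push_neg at hlt
      have h1r : 0 < 1 - ‖A‖ := by linarith
      obtain ⟨k, hk⟩ := exists_pow_lt_of_lt_one
        (div_pos h1r (by positivity : (0:ℝ) < ‖B‖^2 + 1)) hμ1
      have hb := hspec_bound ‖A‖ hnormmem k
      have hpk : 0 < ‖A‖^k := pow_pos hnA_pos k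
      -- from hb : ‖A‖^k * (1-‖A‖) ≤ μ^k * ‖A‖^k * ‖B‖^2
      have h3 : 1 - ‖A‖ ≤ μ^k * ‖B‖^2 := by
        have := hb
        rw [mul_comm (μ^k) (‖A‖^k), mul_assoc] at this
        exact le_of_mul_le_mul_left this hpk
      have h4 : μ^k * ‖B‖^2 < 1 - ‖A‖ := by
        calc μ^k * ‖B‖^2 ≤ μ^k * (‖B‖^2+1) :=
              mul_le_mul_of_nonneg_left (by linarith) (pow_nonneg hμ0.le k)
          _ < (1-‖A‖) / (‖B‖^2+1) * (‖B‖^2+1) :=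
              mul_lt_mul_of_pos_right hk (by positivity)
          _ = 1 - ‖A‖ := div_mul_cancel₀ (1-‖A‖) (show (‖B‖^2+1:ℝ) ≠ 0 by positivity)
      linarith
    -- spectrum ⊆ [0,μ] ∪ {1}
    have hspec_sub : ∀ l ∈ spectrum ℝ A, l ≤ μ ∨ l = 1 := by
      intro l hl
      by_contra hcon
      push_neg at hcon
      obtain ⟨hμl, hl1⟩ := hcon
      have hl1' : l < 1 := lt_of_le_of_ne (hspec_le1 l hl) hl1
      have h1l : 0 < 1 - l := by linarith
      have hlpos : 0 < l := lt_trans hμ0 hμl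
      obtain ⟨k, hk⟩ := pow_unbounded_of_one_lt (‖B‖^2 / (1 - l))
        ((one_lt_div hμ0).mpr hμl)
      have hb := hspec_bound l hl k
      rw [hnA, one_pow, mul_one] at hb
      -- hb : l^k * (1-l) ≤ μ^k * ‖B‖^2
      have hμk : 0 < μ^k := pow_pos hμ0 k
      have : ‖B‖^2 / (1-l) < l^k / μ^k := by
        rw [div_pow] at hk; exact hk
      have h5 : μ^k * ‖B‖^2 < l^k * (1-l) := by
        rw [div_lt_div_iff₀ h1l hμk] at this
        nlinarith
      linarith
    -- build a kernel vector via cfc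
    set f : ℝ → ℝ := fun t => (1-μ)⁻¹ * max (t - μ) 0 with hf_def
    have hf_cont : Continuous f :=
      continuous_const.mul ((continuous_id.sub continuous_const).max continuous_const)
    have hf1 : f 1 = 1 := by
      simp only [hf_def]
      rw [max_eq_left (by linarith)]
      exact inv_mul_cancel₀ (by linarith)
    have hfμ : ∀ t ≤ μ, f t = 0 := by
      intro t ht
      simp only [hf_def]
      rw [max_eq_right (by linarith)]
      simp
    set C : H →L[ℂ] H := cfc f A with hC_def
    have hone_sub : cfc (fun t : ℝ => 1 - t) A = 1 - A := by
      rw [cfc_sub _ _ A (by fun_prop) (by fun_prop)]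
      simp [cfc_id' ℝ A, cfc_const_one ℝ A]
    have hmulz : (1 - A) * C = 0 := by
      rw [hC_def, ← hone_sub, ← cfc_mul _ _ A (by fun_prop) (by fun_prop)]
      rw [show (fun t : ℝ => (1 - t) * f t) = fun t => (1-t) * f t from rfl]
      have : cfc (fun t : ℝ => (1 - t) * f t) A = cfc (0 : ℝ → ℝ) A := by
        apply cfc_congr
        intro t ht
        simp only [Pi.zero_apply]
        show (1 - t) * f t = 0
        rcases hspec_sub t ht with h | h
        · rw [hfμ t h]; simp
        · rw [h]; simp
      rw [this, cfc_zero]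
    have hCne : C ≠ 0 := by
      intro h
      have hmap := cfc_map_spectrum (f := f) (a := A) hsa (hf_cont.continuousOn)
      have h1mem : (1:ℝ) ∈ spectrum ℝ C := by
        rw [hC_def, hmap]
        exact ⟨1, hnA ▸ hnormmem, hf1⟩
      rw [h, spectrum.zero_eq] at h1mem
      simp at h1mem
    obtain ⟨x, hx⟩ : ∃ x, C x ≠ 0 := by
      by_contra h
      push_neg at h
      exact hCne (ContinuousLinearMap.ext fun x => by simp [h x])
    have hAy : (1 - A) (C x) = 0 := by
      have := congrArg (fun T => T x) hmulz
      simpa [ContinuousLinearMap.mul_apply] using this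
    have hBy : B (C x) = 0 := by
      have hz : (adjoint B * B) (C x) = 0 := by rw [hBB]; exact hAy
      have hinner : (inner ℂ (B (C x)) (B (C x)) : ℂ) = 0 := by
        rw [← ContinuousLinearMap.adjoint_inner_left]
        have : adjoint B (B (C x)) = 0 := by
          simpa [ContinuousLinearMap.mul_apply] using hz
        rw [this, inner_zero_left]
      exact inner_self_eq_zero.mp hinner
    have : C x ∈ LinearMap.ker (B : H →ₗ[ℂ] H) := hBy
    rw [hker] at this
    exact hx (by simpa using this)
  · -- easy direction
    intro hA0
    rw [hA0, zero_add] at h2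
    rw [LinearMap.ker_eq_bot']
    intro x hx
    have : (adjoint B * B) x = x := by rw [h2, ContinuousLinearMap.one_apply]
    rw [ContinuousLinearMap.mul_apply, (show B x = 0 from hx), map_zero] at this
    exact this.symm
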